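/- Let V : ℝⁿ → ℝ be three times continuously differentiable and let f : ℝⁿ → Mₙ(ℝ) be a continuous matrix-valued function. Let x₀, v₀ ∈ ℝⁿ and let q be a solution of q''(t) = −∇V(q(t)) on a neighborhood of 0 with q(0) = x₀ and q'(0) = v₀. For h > 0 small enough that the matrices appearing below are invertible, define a₀(h) = −(I + h² f(x₀))⁻¹ ∇V(x₀), x₁(h) = x₀ + h v₀ + ½ h² a₀(h), a₁(h) = −(I + h² f(x₁(h)))⁻¹ ∇V(x₁(h)), and v₁(h) = v₀ + ½ h (a₀(h) + a₁(h)). Then there exist constants C > 0 and h₀ > 0 such that for all h ∈ (0, h₀], ‖q(h) − x₁(h)‖ ≤ C h³ and ‖q'(h) − v₁(h)‖ ≤ C h³; i.e., the integrator has a third-order local error. -/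

import Mathlib

open Matrix Set

section helpers
variable {n : ℕ}

private lemma mvt_pow {E : Type*} [NormedAddCommGroup E] [NormedSpace ℝ E]
    {g g' : ℝ → E} {b K : ℝ} (m : ℕ)
    (hg : ∀ s ∈ Set.Icc (0:ℝ) b, HasDerivAt g (g' s) s)
    (h0 : g 0 = 0)
    (hbound : ∀ s ∈ Set.Icc (0:ℝ) b, ‖g' s‖ ≤ K * s ^ m) :
    ∀ s ∈ Set.Icc (0:ℝ) b, ‖g s‖ ≤ K / (m + 1) * s ^ (m + 1) := by
  intro s hs
  have hB : ∀ x : ℝ, HasDerivAt (fun t => K / (m + 1) * t ^ (m + 1)) (K * x ^ m) x := by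
    intro x
    have h1 := (hasDerivAt_pow (m + 1) x).const_mul (K / (m + 1))
    refine h1.congr_deriv ?_
    have h2 : ((m : ℝ) + 1) ≠ 0 := by positivity
    push_cast
    field_simp
  exact image_norm_le_of_norm_deriv_right_le_deriv_boundary
    (fun x hx => (hg x hx).continuousAt.continuousWithinAt)
    (fun x hx => (hg x ⟨hx.1, le_of_lt hx.2⟩).hasDerivWithinAt)
    (by simp [h0]) hB (fun x hx => hbound x ⟨hx.1, le_of_lt hx.2⟩) hs

private lemma key_id (F : Matrix (Fin n) (Fin n) ℝ) (v : Fin n → ℝ) (h : ℝ)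
    (hu : IsUnit ((1 : Matrix (Fin n) (Fin n) ℝ) + h ^ 2 • F)) :
    -(((1 : Matrix (Fin n) (Fin n) ℝ) + h ^ 2 • F)⁻¹.mulVec v) + v
      = h ^ 2 • (((1 : Matrix (Fin n) (Fin n) ℝ) + h ^ 2 • F)⁻¹.mulVec (F.mulVec v)) := by
  set B := (1 : Matrix (Fin n) (Fin n) ℝ) + h ^ 2 • F with hB
  have hdet : IsUnit B.det := (Matrix.isUnit_iff_isUnit_det B).mp hu
  have h1 : B⁻¹.mulVec (B.mulVec v) = v := by
    rw [Matrix.mulVec_mulVec, Matrix.nonsing_inv_mul B hdet, Matrix.one_mulVec]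
  have h2 : B.mulVec v - v = h ^ 2 • F.mulVec v := by
    rw [hB, Matrix.add_mulVec, Matrix.one_mulVec, ← Matrix.smul_mulVec]
    abel
  calc -(B⁻¹.mulVec v) + v = B⁻¹.mulVec (B.mulVec v - v) := by
        rw [Matrix.mulVec_sub, h1]; abel
    _ = h ^ 2 • B⁻¹.mulVec (F.mulVec v) := by rw [h2, Matrix.mulVec_smul]

private lemma contOn_inv {X : Type*} [TopologicalSpace X]
    {M : X → Matrix (Fin n) (Fin n) ℝ} {s : Set X}
    (hM : ContinuousOn M s) (hdet : ∀ x ∈ s, (M x).det ≠ 0) :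
    ContinuousOn (fun x => (M x)⁻¹) s := by
  have heq : ∀ x ∈ s, (M x)⁻¹ = ((M x).det)⁻¹ • (M x).adjugate := by
    intro x _; rw [Matrix.inv_def, Ring.inverse_eq_inv']
  refine ContinuousOn.congr ?_ heq
  exact (((Continuous.matrix_det continuous_id).comp_continuousOn hM).inv₀ hdet).smul
    ((Continuous.matrix_adjugate continuous_id).comp_continuousOn hM)

private lemma contOn_mulVec {X : Type*} [TopologicalSpace X]
    {A : X → Matrix (Fin n) (Fin n) ℝ} {v : X → Fin n → ℝ} {s : Set X}
    (hA : ContinuousOn A s) (hv : ContinuousOn v s) :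
    ContinuousOn (fun x => (A x).mulVec (v x)) s :=
  (Continuous.matrix_mulVec (continuous_fst) (continuous_snd)).comp_continuousOn (hA.prodMk hv)

end helpers

set_option maxHeartbeats 2000000 in
/-- Third-order local error of the linearly-implicit integrator
`a_k = −(I + h² f(x_k))⁻¹ ∇V(x_k)`, `x_{k+1} = x_k + h v_k + ½ h² a_k`,
`v_{k+1} = v_k + ½ h (a_k + a_{k+1})` for the Newtonian dynamics `q'' = −∇V(q)`,
where `V` is `C³` and `f` is a continuous matrix-valued function. -/
theorem stmt_6 (n : ℕ) (V : (Fin n → ℝ) → ℝ) (hV : ContDiff ℝ 3 V)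
    (f : (Fin n → ℝ) → Matrix (Fin n) (Fin n) ℝ) (hf : Continuous f)
    (x₀ v₀ : Fin n → ℝ)
    -- the gradient of V: the vector of partial derivatives
    (gradV : (Fin n → ℝ) → (Fin n → ℝ))
    (hgrad : ∀ y i, gradV y i = fderiv ℝ V y (Pi.single i 1))
    -- q is a solution of q'' = −∇V(q) on a neighborhood (−T, T) of 0,
    -- with derivative q' and initial data (x₀, v₀)
    (T : ℝ) (hT : 0 < T) (q q' : ℝ → (Fin n → ℝ))
    (hq : ∀ t ∈ Set.Ioo (-T) T, HasDerivAt q (q' t) t)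
    (hq' : ∀ t ∈ Set.Ioo (-T) T, HasDerivAt q' (-(gradV (q t))) t)
    (hq0 : q 0 = x₀) (hq'0 : q' 0 = v₀) :
    -- the one-step update of the integrator, as a function of the timestep h
    let a₀ : ℝ → (Fin n → ℝ) := fun h =>
      -(((1 : Matrix (Fin n) (Fin n) ℝ) + h ^ 2 • f x₀)⁻¹.mulVec (gradV x₀))
    let x₁ : ℝ → (Fin n → ℝ) := fun h => x₀ + h • v₀ + (h ^ 2 / 2) • a₀ h
    let a₁ : ℝ → (Fin n → ℝ) := fun h =>
      -(((1 : Matrix (Fin n) (Fin n) ℝ) + h ^ 2 • f (x₁ h))⁻¹.mulVec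
        (gradV (x₁ h)))
    let v₁ : ℝ → (Fin n → ℝ) := fun h => v₀ + (h / 2) • (a₀ h + a₁ h)
    ∃ C > (0 : ℝ), ∃ h₀ > (0 : ℝ), ∀ h : ℝ, 0 < h → h ≤ h₀ →
      IsUnit ((1 : Matrix (Fin n) (Fin n) ℝ) + h ^ 2 • f x₀) ∧
      IsUnit ((1 : Matrix (Fin n) (Fin n) ℝ) + h ^ 2 • f (x₁ h)) ∧
      ‖q h - x₁ h‖ ≤ C * h ^ 3 ∧ ‖q' h - v₁ h‖ ≤ C * h ^ 3 := by
  intro a₀ x₁ a₁ v₁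
  classical
  have ha₀eq : ∀ h : ℝ, a₀ h =
      -(((1 : Matrix (Fin n) (Fin n) ℝ) + h ^ 2 • f x₀)⁻¹.mulVec (gradV x₀)) := fun _ => rfl
  have hx₁eq : ∀ h : ℝ, x₁ h = x₀ + h • v₀ + (h ^ 2 / 2) • a₀ h := fun _ => rfl
  have ha₁eq : ∀ h : ℝ, a₁ h =
      -(((1 : Matrix (Fin n) (Fin n) ℝ) + h ^ 2 • f (x₁ h))⁻¹.mulVec (gradV (x₁ h))) :=
    fun _ => rfl
  have hv₁eq : ∀ h : ℝ, v₁ h = v₀ + (h / 2) • (a₀ h + a₁ h) := fun _ => rfl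
  -- smoothness of gradV
  have hgradV : gradV = fun y => fun i => fderiv ℝ V y (Pi.single i 1) := by
    funext y i; exact hgrad y i
  have hg2 : ContDiff ℝ 2 gradV := by
    rw [hgradV]
    have hfd : ContDiff ℝ 2 (fderiv ℝ V) := hV.fderiv_right (by norm_num)
    exact contDiff_pi.mpr fun i => hfd.clm_apply contDiff_const
  have hgc : Continuous gradV := hg2.continuous
  have hgd : Differentiable ℝ gradV := hg2.differentiable two_ne_zero
  set Dg : (Fin n → ℝ) → ((Fin n → ℝ) →L[ℝ] (Fin n → ℝ)) := fderiv ℝ gradV with hDgdef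
  have hDg1 : ContDiff ℝ 1 Dg := hg2.fderiv_right (by norm_num)
  have hDgc : Continuous Dg := hDg1.continuous
  have hDgd : Differentiable ℝ Dg := hDg1.differentiable one_ne_zero
  have hD2c : Continuous (fderiv ℝ Dg) := hDg1.continuous_fderiv one_ne_zero
  -- the explicit (reference) one-step map
  set c : Fin n → ℝ := gradV x₀ with hc
  set ex : ℝ → (Fin n → ℝ) := fun s => x₀ + s • v₀ + (s ^ 2 / 2) • (-c) with hexdef
  set xd : ℝ → (Fin n → ℝ) := fun s => v₀ + s • (-c) with hxddef
  have hex0 : ex 0 = x₀ := by simp [hexdef]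
  have hxd0 : xd 0 = v₀ := by simp [hxddef]
  have hexd : ∀ s : ℝ, HasDerivAt ex (xd s) s := by
    intro s
    have h1 : HasDerivAt (fun t : ℝ => x₀ + t • v₀) ((1:ℝ) • v₀) s :=
      ((hasDerivAt_id s).smul_const v₀).const_add x₀
    have h2 : HasDerivAt (fun t : ℝ => (t ^ 2 / 2) • (-c)) ((2 * s ^ 1 / 2) • (-c)) s :=
      ((hasDerivAt_pow 2 s).div_const 2).smul_const (-c)
    have h3 := h1.add h2
    refine h3.congr_deriv ?_
    simp [hxddef]
  have hxdd : ∀ s : ℝ, HasDerivAt xd (-c) s := by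
    intro s
    have h1 : HasDerivAt (fun t : ℝ => v₀ + t • (-c)) ((1:ℝ) • (-c)) s :=
      ((hasDerivAt_id s).smul_const (-c)).const_add v₀
    convert h1 using 1
    module
  have hexC : Continuous ex := by
    apply Continuous.add
    · exact continuous_const.add (continuous_id.smul continuous_const)
    · exact ((continuous_pow 2).div_const 2).smul continuous_const
  have hxdC : Continuous xd := continuous_const.add (continuous_id.smul continuous_const)
  -- g = gradV ∘ ex and its two derivatives
  set g : ℝ → (Fin n → ℝ) := fun s => gradV (ex s) with hgdef
  set g1 : ℝ → (Fin n → ℝ) := fun s => Dg (ex s) (xd s) with hg1def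
  set g2 : ℝ → (Fin n → ℝ) := fun s => (fderiv ℝ Dg (ex s) (xd s)) (xd s) + Dg (ex s) (-c)
    with hg2def
  have hgderiv : ∀ s : ℝ, HasDerivAt g (g1 s) s := fun s =>
    ((hgd (ex s)).hasFDerivAt).comp_hasDerivAt s (hexd s)
  have hg1deriv : ∀ s : ℝ, HasDerivAt g1 (g2 s) s := by
    intro s
    have hu : HasDerivAt (fun t => Dg (ex t)) (fderiv ℝ Dg (ex s) (xd s)) s :=
      ((hDgd (ex s)).hasFDerivAt).comp_hasDerivAt s (hexd s)
    exact hu.clm_apply (hxdd s)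
  have hg1C : Continuous g1 := (hDgc.comp hexC).clm_apply hxdC
  have hg2C : Continuous g2 :=
    (((hD2c.comp hexC).clm_apply hxdC).clm_apply hxdC).add
      ((hDgc.comp hexC).clm_apply continuous_const)
  -- the exact solution side
  set b : ℝ := T / 2 with hbdef
  have hbpos : 0 < b := by positivity
  have hsub : Set.Icc (0:ℝ) b ⊆ Set.Ioo (-T) T := by
    intro s hs
    constructor
    · linarith [hs.1]
    · have : b < T := by rw [hbdef]; linarith
      linarith [hs.2]
  have hqc : ContinuousOn q (Set.Icc 0 b) := fun s hs =>
    ((hq s (hsub hs)).continuousAt).continuousWithinAt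
  have hq'c : ContinuousOn q' (Set.Icc 0 b) := fun s hs =>
    ((hq' s (hsub hs)).continuousAt).continuousWithinAt
  set G : ℝ → (Fin n → ℝ) := fun s => gradV (q s) with hGdef
  set G1 : ℝ → (Fin n → ℝ) := fun s => Dg (q s) (q' s) with hG1def
  set G2 : ℝ → (Fin n → ℝ) := fun s =>
    (fderiv ℝ Dg (q s) (q' s)) (q' s) + Dg (q s) (-(gradV (q s))) with hG2def
  have hGderiv : ∀ s ∈ Set.Icc (0:ℝ) b, HasDerivAt G (G1 s) s := fun s hs =>
    ((hgd (q s)).hasFDerivAt).comp_hasDerivAt s (hq s (hsub hs))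
  have hG1deriv : ∀ s ∈ Set.Icc (0:ℝ) b, HasDerivAt G1 (G2 s) s := by
    intro s hs
    have hu : HasDerivAt (fun t => Dg (q t)) (fderiv ℝ Dg (q s) (q' s)) s :=
      ((hDgd (q s)).hasFDerivAt).comp_hasDerivAt s (hq s (hsub hs))
    exact hu.clm_apply (hq' s (hsub hs))
  have hG1c : ContinuousOn G1 (Set.Icc 0 b) :=
    ((hDgc.comp_continuousOn hqc).clm_apply hq'c)
  have hG2c : ContinuousOn G2 (Set.Icc 0 b) :=
    (((hD2c.comp_continuousOn hqc).clm_apply hq'c).clm_apply hq'c).add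
      ((hDgc.comp_continuousOn hqc).clm_apply ((hgc.comp_continuousOn hqc).neg))
  -- bounds on compact
  obtain ⟨M₀', hM₀'⟩ := isCompact_Icc.exists_bound_of_continuousOn hG1c
  set M₀ : ℝ := max M₀' 0 with hM₀def
  have hM₀ : ∀ s ∈ Set.Icc (0:ℝ) b, ‖G1 s‖ ≤ M₀ := fun s hs =>
    (hM₀' s hs).trans (le_max_left _ _)
  obtain ⟨M₁', hM₁'⟩ := isCompact_Icc.exists_bound_of_continuousOn
    ((hg2C.continuousOn (s := Set.Icc 0 b)).sub hG2c)
  set M₁ : ℝ := max M₁' 0 with hM₁def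
  have hM₁ : ∀ s ∈ Set.Icc (0:ℝ) b, ‖g2 s - G2 s‖ ≤ M₁ := fun s hs =>
    (hM₁' s hs).trans (le_max_left _ _)
  obtain ⟨M₂', hM₂'⟩ := isCompact_Icc.exists_bound_of_continuousOn
    (hg2C.continuousOn (s := Set.Icc 0 b))
  set M₂ : ℝ := max M₂' 0 with hM₂def
  have hM₂ : ∀ s ∈ Set.Icc (0:ℝ) b, ‖g2 s‖ ≤ M₂ := fun s hs =>
    (hM₂' s hs).trans (le_max_left _ _)
  -- position error estimate
  set e : ℝ → (Fin n → ℝ) := fun s => q s - ex s with hedef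
  set e1 : ℝ → (Fin n → ℝ) := fun s => q' s - xd s with he1def
  set e2 : ℝ → (Fin n → ℝ) := fun s => -(G s) - (-c) with he2def
  have he2deriv : ∀ s ∈ Set.Icc (0:ℝ) b, HasDerivAt e2 (-(G1 s)) s := fun s hs =>
    ((hGderiv s hs).neg).sub_const (-c)
  have he2_0 : e2 0 = 0 := by simp [he2def, hGdef, hq0, hc]
  have he2bd : ∀ s ∈ Set.Icc (0:ℝ) b, ‖e2 s‖ ≤ M₀ * s := by
    intro s hs
    have h := mvt_pow 0 he2deriv he2_0 (fun s hs => by simpa using hM₀ s hs) s hs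
    convert h using 1
    push_cast
    ring
  have he1deriv : ∀ s ∈ Set.Icc (0:ℝ) b, HasDerivAt e1 (e2 s) s := fun s hs =>
    (hq' s (hsub hs)).sub (hxdd s)
  have he1_0 : e1 0 = 0 := by simp [he1def, hq'0, hxd0]
  have he1bd : ∀ s ∈ Set.Icc (0:ℝ) b, ‖e1 s‖ ≤ M₀ / 2 * s ^ 2 := by
    intro s hs
    have h := mvt_pow (K := M₀) 1 he1deriv he1_0
      (fun s hs => by simpa using he2bd s hs) s hs
    convert h using 1
    push_cast
    ring
  have hederiv : ∀ s ∈ Set.Icc (0:ℝ) b, HasDerivAt e (e1 s) s := fun s hs =>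
    (hq s (hsub hs)).sub (hexd s)
  have he_0 : e 0 = 0 := by simp [hedef, hq0, hex0]
  have hebd : ∀ s ∈ Set.Icc (0:ℝ) b, ‖e s‖ ≤ M₀ / 6 * s ^ 3 := by
    intro s hs
    have h := mvt_pow (K := M₀ / 2) 2 hederiv he_0 (fun s hs => he1bd s hs) s hs
    convert h using 1
    push_cast
    ring
  -- velocity error estimate
  set ψ : ℝ → (Fin n → ℝ) := fun s => g1 s - G1 s with hψdef
  have hψderiv : ∀ s ∈ Set.Icc (0:ℝ) b, HasDerivAt ψ (g2 s - G2 s) s := fun s hs =>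
    (hg1deriv s).sub (hG1deriv s hs)
  have hψ0 : ψ 0 = 0 := by
    simp only [hψdef, hg1def, hG1def, hex0, hxd0, hq0, hq'0, sub_self]
  have hψbd : ∀ s ∈ Set.Icc (0:ℝ) b, ‖ψ s‖ ≤ M₁ * s := by
    intro s hs
    have h := mvt_pow 0 hψderiv hψ0 (fun s hs => by simpa using hM₁ s hs) s hs
    convert h using 1
    push_cast
    ring
  set w : ℝ → (Fin n → ℝ) := fun s => q' s - v₀ + (s / 2) • (c + g s) with hwdef
  set w1 : ℝ → (Fin n → ℝ) := fun s =>
    -(G s) + ((1:ℝ) / 2) • (c + g s) + (s / 2) • g1 s with hw1def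
  set w2 : ℝ → (Fin n → ℝ) := fun s => ψ s + (s / 2) • g2 s with hw2def
  have hwderiv : ∀ s ∈ Set.Icc (0:ℝ) b, HasDerivAt w (w1 s) s := by
    intro s hs
    have h1 : HasDerivAt (fun t => q' t - v₀) (-(G s)) s := (hq' s (hsub hs)).sub_const v₀
    have hs2 : HasDerivAt (fun t : ℝ => t / 2) ((1:ℝ) / 2) s := by
      simpa using (hasDerivAt_id s).div_const 2
    have h2 := hs2.smul ((hasDerivAt_const s c).add (hgderiv s))
    have h3 := h1.add h2
    refine h3.congr_deriv ?_
    simp only [hw1def, Pi.add_apply]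
    module
  have hw1deriv : ∀ s ∈ Set.Icc (0:ℝ) b, HasDerivAt w1 (w2 s) s := by
    intro s hs
    have h1 : HasDerivAt (fun t => -(G t)) (-(G1 s)) s := (hGderiv s hs).neg
    have h2 : HasDerivAt (fun t => ((1:ℝ) / 2) • (c + g t)) (((1:ℝ) / 2) • g1 s) s := by
      have := ((hasDerivAt_const s c).add (hgderiv s)).const_smul ((1:ℝ) / 2)
      exact this.congr_deriv (by simp)
    have hs2 : HasDerivAt (fun t : ℝ => t / 2) ((1:ℝ) / 2) s := by
      simpa using (hasDerivAt_id s).div_const 2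
    have h3 := hs2.smul (hg1deriv s)
    have h4 := (h1.add h2).add h3
    refine h4.congr_deriv ?_
    simp only [hw2def, hψdef]
    module
  have hw0 : w 0 = 0 := by simp [hwdef, hq'0]
  have hw10 : w1 0 = 0 := by
    have hG0 : G 0 = c := by simp only [hGdef, hq0, hc]
    have hg0 : g 0 = c := by simp only [hgdef, hex0, hc]
    simp only [hw1def, hG0, hg0]
    module
  set Lw : ℝ := M₁ + M₂ / 2 with hLwdef
  have hw2bd : ∀ s ∈ Set.Icc (0:ℝ) b, ‖w2 s‖ ≤ Lw * s := by
    intro s hs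
    have h1 : ‖w2 s‖ ≤ ‖ψ s‖ + ‖(s / 2) • g2 s‖ := norm_add_le _ _
    have h2 : ‖(s / 2) • g2 s‖ = |s / 2| * ‖g2 s‖ := by
      rw [norm_smul, Real.norm_eq_abs]
    have hsnn : (0:ℝ) ≤ s := hs.1
    have h3 : |s / 2| = s / 2 := abs_of_nonneg (by linarith)
    have h4 : ‖(s / 2) • g2 s‖ ≤ (s / 2) * M₂ := by
      rw [h2, h3]
      exact mul_le_mul_of_nonneg_left (hM₂ s hs) (by linarith)
    have h5 := hψbd s hs
    calc ‖w2 s‖ ≤ ‖ψ s‖ + ‖(s / 2) • g2 s‖ := h1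
      _ ≤ M₁ * s + s / 2 * M₂ := add_le_add h5 h4
      _ = Lw * s := by rw [hLwdef]; ring
  have hw1bd : ∀ s ∈ Set.Icc (0:ℝ) b, ‖w1 s‖ ≤ Lw / 2 * s ^ 2 := by
    intro s hs
    have h := mvt_pow (K := Lw) 1 hw1deriv hw10
      (fun s hs => by simpa using hw2bd s hs) s hs
    convert h using 1
    push_cast
    ring
  have hwbd : ∀ s ∈ Set.Icc (0:ℝ) b, ‖w s‖ ≤ Lw / 6 * s ^ 3 := by
    intro s hs
    have h := mvt_pow (K := Lw / 2) 2 hwderiv hw0 (fun s hs => hw1bd s hs) s hs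
    convert h using 1
    push_cast
    ring
  -- matrix invertibility and continuity
  set F₀ : Matrix (Fin n) (Fin n) ℝ := f x₀ with hF₀def
  set B0 : ℝ → Matrix (Fin n) (Fin n) ℝ := fun h => 1 + h ^ 2 • F₀ with hB0def
  have hB0c : Continuous B0 := continuous_const.add ((continuous_pow 2).smul continuous_const)
  have hd0c : Continuous (fun h => (B0 h).det) := hB0c.matrix_det
  have hd00 : (B0 0).det = 1 := by simp [hB0def]
  have hev : ∀ᶠ h in nhds (0:ℝ), (B0 h).det ≠ 0 :=
    hd0c.continuousAt.eventually_ne (by rw [hd00]; norm_num)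
  obtain ⟨δ₀, hδ₀pos, hδ₀⟩ := Metric.eventually_nhds_iff.mp hev
  set δ : ℝ := δ₀ / 2 with hδdef
  have hδpos : 0 < δ := by positivity
  have hUdet : ∀ h ∈ Set.Icc (-δ) δ, (B0 h).det ≠ 0 := by
    intro h hh
    apply hδ₀
    rw [Real.dist_eq, sub_zero]
    have h1 : |h| ≤ δ := abs_le.mpr ⟨hh.1, hh.2⟩
    have h2 : δ < δ₀ := by rw [hδdef]; linarith
    linarith
  have hIsUnit0 : ∀ h ∈ Set.Icc (-δ) δ, IsUnit (B0 h) := fun h hh =>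
    (Matrix.isUnit_iff_isUnit_det _).mpr (isUnit_iff_ne_zero.mpr (hUdet h hh))
  have hinv0c : ContinuousOn (fun h => (B0 h)⁻¹) (Set.Icc (-δ) δ) :=
    contOn_inv hB0c.continuousOn hUdet
  have ha₀c : ContinuousOn a₀ (Set.Icc (-δ) δ) := by
    refine ContinuousOn.congr ?_ (fun h _ => ha₀eq h)
    exact (contOn_mulVec hinv0c continuousOn_const).neg
  have hx₁c : ContinuousOn x₁ (Set.Icc (-δ) δ) := by
    refine ContinuousOn.congr ?_ (fun h _ => hx₁eq h)
    exact (continuousOn_const.add (continuousOn_id.smul continuousOn_const)).add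
      (((continuousOn_id.pow 2).div_const 2).smul ha₀c)
  have hx₁0 : x₁ 0 = x₀ := by rw [hx₁eq]; simp
  set B1 : ℝ → Matrix (Fin n) (Fin n) ℝ := fun h => 1 + h ^ 2 • f (x₁ h) with hB1def
  have hB1c : ContinuousOn B1 (Set.Icc (-δ) δ) :=
    continuousOn_const.add ((continuousOn_id.pow 2).smul (hf.comp_continuousOn hx₁c))
  have hd1c : ContinuousOn (fun h => (B1 h).det) (Set.Icc (-δ) δ) :=
    (Continuous.matrix_det continuous_id).comp_continuousOn hB1c
  have hmemδ : (0:ℝ) ∈ Set.Icc (-δ) δ := ⟨by linarith, by linarith⟩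
  have hd10 : (B1 0).det = 1 := by simp [hB1def]
  have hev1 : (fun h => (B1 h).det) ⁻¹' {x : ℝ | x ≠ 0} ∈ nhdsWithin 0 (Set.Icc (-δ) δ) := by
    refine (hd1c 0 hmemδ) ?_
    have hbeta : ((fun h => (B1 h).det) 0) = 1 := hd10
    rw [hbeta]
    exact isOpen_ne.mem_nhds one_ne_zero
  obtain ⟨ε₁, hε₁pos, hball1⟩ := Metric.mem_nhdsWithin_iff.mp hev1
  set δ₂ : ℝ := min δ (ε₁ / 2) with hδ₂def
  have hδ₂pos : 0 < δ₂ := lt_min hδpos (by positivity)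
  have hU₂sub : Set.Icc (0:ℝ) δ₂ ⊆ Set.Icc (-δ) δ := by
    intro h hh
    have := min_le_left δ (ε₁ / 2)
    exact ⟨by linarith [hh.1], by linarith [hh.2]⟩
  have hU₂det : ∀ h ∈ Set.Icc (0:ℝ) δ₂, (B1 h).det ≠ 0 := by
    intro h hh
    refine hball1 ⟨?_, hU₂sub hh⟩
    rw [Metric.mem_ball, Real.dist_eq, sub_zero]
    have h1 : |h| ≤ δ₂ := abs_le.mpr ⟨by linarith [hh.1, hδ₂pos], hh.2⟩
    have h2 : δ₂ ≤ ε₁ / 2 := min_le_right _ _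
    linarith
  have hIsUnit1 : ∀ h ∈ Set.Icc (0:ℝ) δ₂, IsUnit (B1 h) := fun h hh =>
    (Matrix.isUnit_iff_isUnit_det _).mpr (isUnit_iff_ne_zero.mpr (hU₂det h hh))
  have hinv1c : ContinuousOn (fun h => (B1 h)⁻¹) (Set.Icc (0:ℝ) δ₂) :=
    contOn_inv (hB1c.mono hU₂sub) hU₂det
  -- bounded correction vectors
  set r₀ : ℝ → (Fin n → ℝ) := fun h => (B0 h)⁻¹.mulVec (F₀.mulVec c) with hr₀def
  have hr₀c : ContinuousOn r₀ (Set.Icc (-δ) δ) := contOn_mulVec hinv0c continuousOn_const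
  obtain ⟨R₀', hR₀'⟩ := isCompact_Icc.exists_bound_of_continuousOn hr₀c
  set R₀ : ℝ := max R₀' 0 with hR₀def2
  have hR₀nn : 0 ≤ R₀ := le_max_right _ _
  have hR₀ : ∀ h ∈ Set.Icc (-δ) δ, ‖r₀ h‖ ≤ R₀ := fun h hh =>
    (hR₀' h hh).trans (le_max_left _ _)
  set r₁ : ℝ → (Fin n → ℝ) := fun h =>
    (B1 h)⁻¹.mulVec ((f (x₁ h)).mulVec (gradV (x₁ h))) with hr₁def
  have hr₁c : ContinuousOn r₁ (Set.Icc (0:ℝ) δ₂) :=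
    contOn_mulVec hinv1c (contOn_mulVec (hf.comp_continuousOn (hx₁c.mono hU₂sub))
      (hgc.comp_continuousOn (hx₁c.mono hU₂sub)))
  obtain ⟨R₁', hR₁'⟩ := isCompact_Icc.exists_bound_of_continuousOn hr₁c
  set R₁ : ℝ := max R₁' 0 with hR₁def2
  have hR₁nn : 0 ≤ R₁ := le_max_right _ _
  have hR₁ : ∀ h ∈ Set.Icc (0:ℝ) δ₂, ‖r₁ h‖ ≤ R₁ := fun h hh =>
    (hR₁' h hh).trans (le_max_left _ _)
  -- key algebraic identities
  have hid0 : ∀ h : ℝ, IsUnit (B0 h) → a₀ h + c = h ^ 2 • r₀ h := by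
    intro h hu
    rw [ha₀eq]
    exact key_id F₀ c h hu
  have hid1 : ∀ h : ℝ, IsUnit (B1 h) → a₁ h + gradV (x₁ h) = h ^ 2 • r₁ h := by
    intro h hu
    rw [ha₁eq]
    exact key_id (f (x₁ h)) (gradV (x₁ h)) h hu
  -- Lipschitz estimate for gradV near x₀
  obtain ⟨Kl, t, ht, hlip⟩ := ((hg2.contDiffAt (x := x₀)).of_le one_le_two).exists_lipschitzOnWith
  obtain ⟨ε₂, hε₂pos, hballt⟩ := Metric.mem_nhds_iff.mp ht
  have hx₁near : x₁ ⁻¹' Metric.ball x₀ ε₂ ∈ nhdsWithin 0 (Set.Icc (-δ) δ) := by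
    refine (hx₁c 0 hmemδ) ?_
    have hbeta : x₁ 0 = x₀ := hx₁0
    rw [hbeta]
    exact Metric.ball_mem_nhds _ hε₂pos
  obtain ⟨ε₃, hε₃pos, hball3⟩ := Metric.mem_nhdsWithin_iff.mp hx₁near
  have hexnear : ex ⁻¹' Metric.ball x₀ ε₂ ∈ nhds (0:ℝ) := by
    refine (hexC.continuousAt (x := 0)) ?_
    rw [hex0]
    exact Metric.ball_mem_nhds _ hε₂pos
  obtain ⟨ε₄, hε₄pos, hball4⟩ := Metric.mem_nhds_iff.mp hexnear
  -- nonnegativity facts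
  have hM₀nn : 0 ≤ M₀ := le_max_right _ _
  have hM₁nn : 0 ≤ M₁ := le_max_right _ _
  have hM₂nn : 0 ≤ M₂ := le_max_right _ _
  have hLwnn : 0 ≤ Lw := by rw [hLwdef]; linarith
  have hKlnn : (0:ℝ) ≤ (Kl:ℝ) := Kl.coe_nonneg
  -- the final constants
  refine ⟨M₀ / 6 + R₀ / 2 + Lw / 6 + R₁ / 2 + (Kl:ℝ) * R₀ / 4 + 1,
    by nlinarith [mul_nonneg hKlnn hR₀nn, hM₀nn, hR₀nn, hLwnn, hR₁nn],
    min (min b δ₂) (min (min (ε₃ / 2) (ε₄ / 2)) 1),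
    lt_min (lt_min hbpos hδ₂pos) (lt_min (lt_min (half_pos hε₃pos) (half_pos hε₄pos)) one_pos),
    ?_⟩
  intro h hpos hle
  have hle1 : h ≤ 1 := le_trans hle (le_trans (min_le_right _ _) (min_le_right _ _))
  have hleb : h ≤ b := le_trans hle (le_trans (min_le_left _ _) (min_le_left _ _))
  have hleδ₂ : h ≤ δ₂ := le_trans hle (le_trans (min_le_left _ _) (min_le_right _ _))
  have hleε₃ : h < ε₃ := by
    have := le_trans hle (le_trans (min_le_right _ _) (le_trans (min_le_left _ _) (min_le_left _ _)))
    linarith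
  have hleε₄ : h < ε₄ := by
    have := le_trans hle (le_trans (min_le_right _ _) (le_trans (min_le_left _ _) (min_le_right _ _)))
    linarith
  have hhb : h ∈ Set.Icc (0:ℝ) b := ⟨le_of_lt hpos, hleb⟩
  have hhδ₂ : h ∈ Set.Icc (0:ℝ) δ₂ := ⟨le_of_lt hpos, hleδ₂⟩
  have hhδ : h ∈ Set.Icc (-δ) δ := hU₂sub hhδ₂
  have hu0 : IsUnit (B0 h) := hIsUnit0 h hhδ
  have hu1 : IsUnit (B1 h) := hIsUnit1 h hhδ₂
  have hdist : dist h 0 = h := by rw [Real.dist_eq, sub_zero, abs_of_pos hpos]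
  have hmem2 : x₁ h ∈ t := by
    apply hballt
    exact hball3 ⟨by rw [Metric.mem_ball, hdist]; exact hleε₃, hhδ⟩
  have hmem1 : ex h ∈ t := by
    apply hballt
    exact hball4 (by rw [Metric.mem_ball, hdist]; exact hleε₄)
  have h42 : h ^ 4 ≤ h ^ 2 := pow_le_pow_of_le_one (le_of_lt hpos) hle1 (by norm_num)
  have h43 : h ^ 4 ≤ h ^ 3 := pow_le_pow_of_le_one (le_of_lt hpos) hle1 (by norm_num)
  have hp3 : (0:ℝ) ≤ h ^ 3 := by positivity
  refine ⟨hu0, hu1, ?_, ?_⟩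
  · -- position error
    have hsplit : q h - x₁ h = e h - (h ^ 2 / 2) • (h ^ 2 • r₀ h) := by
      rw [← hid0 h hu0]
      simp only [hedef, hx₁eq, hexdef]
      module
    rw [hsplit]
    have h1 := hebd h hhb
    have h3 := hR₀ h hhδ
    have h2 : ‖(h ^ 2 / 2) • (h ^ 2 • r₀ h)‖ ≤ R₀ / 2 * h ^ 4 := by
      rw [norm_smul, norm_smul, Real.norm_eq_abs, Real.norm_eq_abs,
        abs_of_nonneg (by positivity : (0:ℝ) ≤ h ^ 2 / 2),
        abs_of_nonneg (by positivity : (0:ℝ) ≤ h ^ 2)]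
      nlinarith [norm_nonneg (r₀ h), mul_nonneg (pow_nonneg hpos.le 4) (sub_nonneg.mpr h3)]
    calc ‖e h - (h ^ 2 / 2) • (h ^ 2 • r₀ h)‖
        ≤ ‖e h‖ + ‖(h ^ 2 / 2) • (h ^ 2 • r₀ h)‖ := norm_sub_le _ _
      _ ≤ M₀ / 6 * h ^ 3 + R₀ / 2 * h ^ 4 := add_le_add h1 h2
      _ ≤ (M₀ / 6 + R₀ / 2 + Lw / 6 + R₁ / 2 + (Kl:ℝ) * R₀ / 4 + 1) * h ^ 3 := by
          nlinarith [mul_nonneg (mul_nonneg hKlnn hR₀nn) hp3, mul_nonneg hLwnn hp3,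
            mul_nonneg hR₁nn hp3, mul_nonneg hR₀nn hp3, mul_nonneg hR₀nn (sub_nonneg.mpr h43)]
  · -- velocity error
    have hsplit2 : q' h - v₁ h =
        w h - (h / 2) • (h ^ 2 • r₀ h + h ^ 2 • r₁ h + (g h - gradV (x₁ h))) := by
      rw [← hid0 h hu0, ← hid1 h hu1]
      simp only [hwdef, hv₁eq, hgdef]
      module
    rw [hsplit2]
    have hw3 := hwbd h hhb
    have hr0b := hR₀ h hhδ
    have hr1b := hR₁ h hhδ₂
    have hexx1 : ex h - x₁ h = -((h ^ 2 / 2) • (h ^ 2 • r₀ h)) := by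
      rw [← hid0 h hu0]
      simp only [hexdef, hx₁eq]
      module
    have hexx1n : ‖ex h - x₁ h‖ ≤ R₀ / 2 * h ^ 2 := by
      rw [hexx1, norm_neg, norm_smul, norm_smul, Real.norm_eq_abs, Real.norm_eq_abs,
        abs_of_nonneg (by positivity : (0:ℝ) ≤ h ^ 2 / 2),
        abs_of_nonneg (by positivity : (0:ℝ) ≤ h ^ 2)]
      nlinarith [norm_nonneg (r₀ h), mul_nonneg (pow_nonneg hpos.le 4) (sub_nonneg.mpr hr0b),
        mul_nonneg hR₀nn (sub_nonneg.mpr h42)]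
    have hlipb : ‖g h - gradV (x₁ h)‖ ≤ (Kl:ℝ) * (R₀ / 2 * h ^ 2) := by
      have hd := hlip.dist_le_mul _ hmem1 _ hmem2
      rw [dist_eq_norm, dist_eq_norm] at hd
      have : ‖g h - gradV (x₁ h)‖ ≤ (Kl:ℝ) * ‖ex h - x₁ h‖ := by
        simpa only [hgdef] using hd
      exact this.trans (mul_le_mul_of_nonneg_left hexx1n hKlnn)
    have n1 : ‖h ^ 2 • r₀ h‖ ≤ R₀ * h ^ 2 := by
      rw [norm_smul, Real.norm_eq_abs, abs_of_nonneg (by positivity : (0:ℝ) ≤ h ^ 2)]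
      nlinarith [norm_nonneg (r₀ h), mul_nonneg (pow_nonneg hpos.le 2) (sub_nonneg.mpr hr0b)]
    have n2 : ‖h ^ 2 • r₁ h‖ ≤ R₁ * h ^ 2 := by
      rw [norm_smul, Real.norm_eq_abs, abs_of_nonneg (by positivity : (0:ℝ) ≤ h ^ 2)]
      nlinarith [norm_nonneg (r₁ h), mul_nonneg (pow_nonneg hpos.le 2) (sub_nonneg.mpr hr1b)]
    have hSb : ‖h ^ 2 • r₀ h + h ^ 2 • r₁ h + (g h - gradV (x₁ h))‖
        ≤ (R₀ + R₁ + (Kl:ℝ) * (R₀ / 2)) * h ^ 2 := by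
      calc ‖h ^ 2 • r₀ h + h ^ 2 • r₁ h + (g h - gradV (x₁ h))‖
          ≤ ‖h ^ 2 • r₀ h‖ + ‖h ^ 2 • r₁ h‖ + ‖g h - gradV (x₁ h)‖ := norm_add₃_le
        _ ≤ R₀ * h ^ 2 + R₁ * h ^ 2 + (Kl:ℝ) * (R₀ / 2 * h ^ 2) :=
            add_le_add (add_le_add n1 n2) hlipb
        _ = (R₀ + R₁ + (Kl:ℝ) * (R₀ / 2)) * h ^ 2 := by ring
    calc ‖w h - (h / 2) • (h ^ 2 • r₀ h + h ^ 2 • r₁ h + (g h - gradV (x₁ h)))‖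
        ≤ ‖w h‖ + ‖(h / 2) • (h ^ 2 • r₀ h + h ^ 2 • r₁ h + (g h - gradV (x₁ h)))‖ :=
          norm_sub_le _ _
      _ ≤ Lw / 6 * h ^ 3 + h / 2 * ((R₀ + R₁ + (Kl:ℝ) * (R₀ / 2)) * h ^ 2) := by
          refine add_le_add hw3 ?_
          rw [norm_smul, Real.norm_eq_abs, abs_of_nonneg (by positivity : (0:ℝ) ≤ h / 2)]
          exact mul_le_mul_of_nonneg_left hSb (by positivity)
      _ ≤ (M₀ / 6 + R₀ / 2 + Lw / 6 + R₁ / 2 + (Kl:ℝ) * R₀ / 4 + 1) * h ^ 3 := by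
          nlinarith [mul_nonneg hM₀nn hp3, hp3, mul_nonneg (mul_nonneg hKlnn hR₀nn) hp3]
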